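/- For two finite signed measures μ and ν on a Polish space X, each with total mass 1 and finite first moment, the quantity W₁(μ⁺+ν⁻, μ⁻+ν⁺) (the 1-Wasserstein distance between the balanced positive measures) does not depend on the choice of decompositions μ = μ⁺ − μ⁻ and ν = ν⁺ − ν⁻ into finite positive measures with finite first moments. -/

import Mathlib

open MeasureTheory

/-- The 1-Wasserstein distance between two finite positive measures of equal total mass,
defined as the infimum of transport costs over couplings. -/
noncomputable def W1 {X : Type*} [MetricSpace X] [MeasurableSpace X]
    (α β : Measure X) : ℝ :=
  sInf {c : ℝ | ∃ π : Measure (X × X),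
    π.map Prod.fst = α ∧ π.map Prod.snd = β ∧ c = ∫ p, dist p.1 p.2 ∂π}

namespace W1WD
open ProbabilityTheory Filter Topology
open scoped ENNReal

section Generic

variable {Y : Type*} [MeasurableSpace Y]

lemma fin_of_ne_top {μ : Measure Y} (h : μ Set.univ ≠ ⊤) : IsFiniteMeasure μ := ⟨h.lt_top⟩

lemma meas_cancel_left {μ ν ν' : Measure Y} [IsFiniteMeasure μ] (h : μ + ν = μ + ν') :
    ν = ν' := by
  ext s hs
  have := congrArg (fun m : Measure Y => m s) h
  simp only [Measure.add_apply] at this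
  exact (ENNReal.add_right_inj (measure_ne_top μ s)).mp this

lemma withDensity_le_self' {μ : Measure Y} {h : Y → ℝ≥0∞} (hh : ∀ y, h y ≤ 1) :
    μ.withDensity h ≤ μ := by
  refine Measure.le_iff.mpr fun s hs => ?_
  rw [withDensity_apply _ hs]
  calc ∫⁻ y in s, h y ∂μ ≤ ∫⁻ _ in s, 1 ∂μ := lintegral_mono fun y => hh y
  _ = μ s := by simp

lemma withDensity_mono_measure {μ ν : Measure Y} (h : μ ≤ ν) (f : Y → ℝ≥0∞) :
    μ.withDensity f ≤ ν.withDensity f := by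
  refine Measure.le_iff.mpr fun s hs => ?_
  rw [withDensity_apply _ hs, withDensity_apply _ hs]
  exact lintegral_mono' (Measure.restrict_mono le_rfl h) le_rfl

end Generic

section Proj

variable {X : Type*} [MeasurableSpace X]

/-- weight a measure on `X × X` by a density depending on the first coordinate. -/
noncomputable def wd1 (f : X → ℝ≥0∞) (m : Measure (X × X)) : Measure (X × X) :=
  m.withDensity fun p => f p.1

/-- weight a measure on `X × X` by a density depending on the second coordinate. -/
noncomputable def wd2 (g : X → ℝ≥0∞) (m : Measure (X × X)) : Measure (X × X) :=
  m.withDensity fun p => g p.2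

lemma wd1_map_fst {f : X → ℝ≥0∞} (hf : Measurable f) (m : Measure (X × X)) :
    (wd1 f m).map Prod.fst = (m.map Prod.fst).withDensity f := by
  ext s hs
  rw [Measure.map_apply measurable_fst hs, wd1,
    withDensity_apply _ (measurable_fst hs), withDensity_apply _ hs,
    setLIntegral_map hs hf measurable_fst]

lemma wd2_map_snd {g : X → ℝ≥0∞} (hg : Measurable g) (m : Measure (X × X)) :
    (wd2 g m).map Prod.snd = (m.map Prod.snd).withDensity g := by
  ext s hs
  rw [Measure.map_apply measurable_snd hs, wd2,
    withDensity_apply _ (measurable_snd hs), withDensity_apply _ hs,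
    setLIntegral_map hs hg measurable_snd]

lemma wd1_add_cancel {f fc : X → ℝ≥0∞} (hfc : Measurable fc)
    (hsum : ∀ x, f x + fc x = 1) (m : Measure (X × X)) :
    wd1 f m + wd1 fc m = m := by
  rw [wd1, wd1]
  have h := withDensity_add_right (μ := m) (fun p : X × X => f p.1)
    (show Measurable fun p : X × X => fc p.1 from hfc.comp measurable_fst)
  rw [← h]
  have h2 : ((fun p : X × X => f p.1) + fun p : X × X => fc p.1) = fun _ => 1 := by
    funext p; exact hsum p.1
  rw [h2]
  simpa using withDensity_one (μ := m)

lemma wd2_add_cancel {g gc : X → ℝ≥0∞} (hgc : Measurable gc)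
    (hsum : ∀ x, g x + gc x = 1) (m : Measure (X × X)) :
    wd2 g m + wd2 gc m = m := by
  rw [wd2, wd2]
  have h := withDensity_add_right (μ := m) (fun p : X × X => g p.2)
    (show Measurable fun p : X × X => gc p.2 from hgc.comp measurable_snd)
  rw [← h]
  have h2 : ((fun p : X × X => g p.2) + fun p : X × X => gc p.2) = fun _ => 1 := by
    funext p; exact hsum p.2
  rw [h2]
  simpa using withDensity_one (μ := m)

lemma measurable_G : Measurable fun p : (X × X) × X => (p.1.1, p.2) :=
  (measurable_fst.comp measurable_fst).prodMk measurable_snd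

lemma measurable_F : Measurable fun p : (X × X) × X => (p.1.2, p.2) :=
  (measurable_snd.comp measurable_fst).prodMk measurable_snd

/-- move the second coordinate according to the kernel `K`. -/
noncomputable def mv (K : Kernel X X) (m : Measure (X × X)) : Measure (X × X) :=
  (m ⊗ₘ (K.comap Prod.snd measurable_snd)).map fun p => (p.1.1, p.2)

/-- one step of the chain: move by `K`, then weight by `g`. -/
noncomputable def Tk (K : Kernel X X) (g : X → ℝ≥0∞) (σ : Measure X) : Measure X :=
  ((σ ⊗ₘ K).map Prod.snd).withDensity g

variable {K : Kernel X X}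

lemma mv_map_fst [IsMarkovKernel K] (m : Measure (X × X)) [SFinite m] :
    (mv K m).map Prod.fst = m.map Prod.fst := by
  rw [mv, Measure.map_map measurable_fst measurable_G]
  have h2 : (Prod.fst ∘ fun p : (X × X) × X => (p.1.1, p.2))
      = (Prod.fst ∘ (Prod.fst : (X × X) × X → X × X)) := rfl
  rw [h2, ← Measure.map_map measurable_fst measurable_fst]
  have h3 : (m ⊗ₘ (K.comap Prod.snd measurable_snd)).map Prod.fst = m :=
    Measure.fst_compProd m _
  rw [h3]

lemma map_swap_compProd [IsSFiniteKernel K] (m : Measure (X × X)) [SFinite m] :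
    (m ⊗ₘ (K.comap Prod.snd measurable_snd)).map (fun p => (p.1.2, p.2))
      = (m.map Prod.snd) ⊗ₘ K := by
  haveI : SFinite (m.map Prod.snd) := inferInstance
  ext s hs
  rw [Measure.map_apply measurable_F hs, Measure.compProd_apply (measurable_F hs),
    Measure.compProd_apply hs,
    lintegral_map (Kernel.measurable_kernel_prodMk_left hs) measurable_snd]
  rfl

lemma mv_map_snd [IsMarkovKernel K] (m : Measure (X × X)) [SFinite m] :
    (mv K m).map Prod.snd = ((m.map Prod.snd) ⊗ₘ K).map Prod.snd := by
  rw [mv, Measure.map_map measurable_snd measurable_G]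
  have h2 : (Prod.snd ∘ fun p : (X × X) × X => (p.1.1, p.2))
      = (Prod.snd ∘ fun p : (X × X) × X => (p.1.2, p.2)) := rfl
  rw [h2, ← Measure.map_map measurable_snd measurable_F, map_swap_compProd]

lemma mv_univ [IsMarkovKernel K] (m : Measure (X × X)) [SFinite m] :
    (mv K m) Set.univ = m Set.univ := by
  rw [mv, Measure.map_apply measurable_G MeasurableSet.univ]
  simpa using Measure.compProd_apply_univ (μ := m) (κ := K.comap Prod.snd measurable_snd)

lemma compProd_mono_left [IsSFiniteKernel K] {σ σ' : Measure X} [SFinite σ] [SFinite σ']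
    (h : σ ≤ σ') : σ ⊗ₘ K ≤ σ' ⊗ₘ K := by
  refine Measure.le_iff.mpr fun s hs => ?_
  rw [Measure.compProd_apply hs, Measure.compProd_apply hs]
  exact lintegral_mono' h le_rfl

lemma Tk_add [IsSFiniteKernel K] (g : X → ℝ≥0∞) (σ σ' : Measure X) [SFinite σ] [SFinite σ'] :
    Tk K g (σ + σ') = Tk K g σ + Tk K g σ' := by
  rw [Tk, Tk, Tk, Measure.compProd_add_left, Measure.map_add _ _ measurable_snd,
    withDensity_add_measure]

lemma Tk_mono [IsSFiniteKernel K] (g : X → ℝ≥0∞) {σ σ' : Measure X} [SFinite σ] [SFinite σ']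
    (h : σ ≤ σ') : Tk K g σ ≤ Tk K g σ' :=
  withDensity_mono_measure (Measure.map_mono (compProd_mono_left h) measurable_snd) g

lemma Tk_univ_le [IsMarkovKernel K] {g : X → ℝ≥0∞} (hg : ∀ x, g x ≤ 1)
    (σ : Measure X) [SFinite σ] : Tk K g σ Set.univ ≤ σ Set.univ := by
  calc Tk K g σ Set.univ ≤ ((σ ⊗ₘ K).map Prod.snd) Set.univ := withDensity_le_self' hg _
  _ = (σ ⊗ₘ K) Set.univ := by rw [Measure.map_apply measurable_snd MeasurableSet.univ]; rfl
  _ = σ Set.univ := Measure.compProd_apply_univ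

lemma Tk_univ_add [IsMarkovKernel K] {g gc : X → ℝ≥0∞} (hgc : Measurable gc)
    (hsum : ∀ x, g x + gc x = 1) (σ : Measure X) [SFinite σ] :
    Tk K g σ Set.univ + Tk K gc σ Set.univ = σ Set.univ := by
  have h1 : Tk K g σ + Tk K gc σ = (σ ⊗ₘ K).map Prod.snd := by
    rw [Tk, Tk, ← withDensity_add_right _ hgc]
    have : g + gc = fun _ => 1 := by funext x; exact hsum x
    rw [this]
    simpa using withDensity_one (μ := (σ ⊗ₘ K).map Prod.snd)
  have h2 := congrArg (fun m : Measure X => m Set.univ) h1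
  simp only [Measure.add_apply] at h2
  rw [h2, Measure.map_apply measurable_snd MeasurableSet.univ]
  simpa using Measure.compProd_apply_univ (μ := σ) (κ := K)

/-- existence of a product coupling for measures of equal finite mass -/
lemma exists_coupling (α β : Measure X) [IsFiniteMeasure α] [IsFiniteMeasure β]
    (h : α Set.univ = β Set.univ) :
    ∃ π : Measure (X × X), π.map Prod.fst = α ∧ π.map Prod.snd = β := by
  rcases eq_or_ne (α Set.univ) 0 with h0 | h0
  · have hα : α = 0 := Measure.measure_univ_eq_zero.mp h0
    have hβ : β = 0 := Measure.measure_univ_eq_zero.mp (h ▸ h0)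
    refine ⟨0, ?_, ?_⟩ <;> simp [hα, hβ]
  · refine ⟨(α Set.univ)⁻¹ • α.prod β, ?_, ?_⟩
    · rw [Measure.map_smul, Measure.map_fst_prod, ← h, smul_smul,
        ENNReal.inv_mul_cancel h0 (measure_ne_top α _), one_smul]
    · rw [Measure.map_smul, Measure.map_snd_prod, smul_smul,
        ENNReal.inv_mul_cancel h0 (measure_ne_top α _), one_smul]

end Proj

section Cost

variable {X : Type*} [MetricSpace X] [MeasurableSpace X] [BorelSpace X]
  [SecondCountableTopology X]

lemma cost_integrable {m : Measure (X × X)} {μ ν : Measure X}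
    [IsFiniteMeasure μ] [IsFiniteMeasure ν]
    (h1 : m.map Prod.fst ≤ μ) (h2 : m.map Prod.snd ≤ ν) (x0 : X)
    (hμ : Integrable (fun x => dist x x0) μ) (hν : Integrable (fun x => dist x x0) ν) :
    Integrable (fun p : X × X => dist p.1 p.2) m := by
  have hc : Continuous fun x : X => dist x x0 := continuous_id.dist continuous_const
  haveI : IsFiniteMeasure m := by
    refine fin_of_ne_top ?_
    have hm : m Set.univ = (m.map Prod.fst) Set.univ := by
      rw [Measure.map_apply measurable_fst MeasurableSet.univ]; rfl
    rw [hm]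
    exact ((Measure.le_iff'.mp h1 _).trans_lt (measure_lt_top μ _)).ne
  have i1 : Integrable (fun p : X × X => dist p.1 x0) m := by
    have h3 : Integrable (fun x => dist x x0) (m.map Prod.fst) := hμ.mono_measure h1
    exact (integrable_map_measure hc.aestronglyMeasurable measurable_fst.aemeasurable).mp h3
  have i2 : Integrable (fun p : X × X => dist p.2 x0) m := by
    have h3 : Integrable (fun x => dist x x0) (m.map Prod.snd) := hν.mono_measure h2
    exact (integrable_map_measure hc.aestronglyMeasurable measurable_snd.aemeasurable).mp h3
  refine (i1.add i2).mono' (measurable_dist).aestronglyMeasurable ?_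
  refine Filter.Eventually.of_forall fun p => ?_
  rw [Real.norm_eq_abs, abs_of_nonneg dist_nonneg]
  calc dist p.1 p.2 ≤ dist p.1 x0 + dist x0 p.2 := dist_triangle _ _ _
  _ = dist p.1 x0 + dist p.2 x0 := by rw [dist_comm x0 p.2]

lemma W1_nonneg_mem {α β : Measure X} {c : ℝ}
    (hc : c ∈ {c : ℝ | ∃ π : Measure (X × X),
      π.map Prod.fst = α ∧ π.map Prod.snd = β ∧ c = ∫ p, dist p.1 p.2 ∂π}) : 0 ≤ c := by
  obtain ⟨π, -, -, rfl⟩ := hc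
  exact integral_nonneg fun p => dist_nonneg

lemma W1_le_cost {α β : Measure X} (π : Measure (X × X))
    (h1 : π.map Prod.fst = α) (h2 : π.map Prod.snd = β) :
    W1 α β ≤ ∫ p, dist p.1 p.2 ∂π :=
  csInf_le ⟨0, fun _ hc => W1_nonneg_mem hc⟩ ⟨π, h1, h2, rfl⟩

/-- adding a common measure decreases the transport cost (easy direction). -/
lemma W1_add_le (α β γ : Measure X)
    [IsFiniteMeasure α] [IsFiniteMeasure β] [IsFiniteMeasure γ] (x0 : X)
    (hmα : Integrable (fun x => dist x x0) α) (hmβ : Integrable (fun x => dist x x0) β)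
    (hmass : α Set.univ = β Set.univ) :
    W1 (α + γ) (β + γ) ≤ W1 α β := by
  obtain ⟨π₀, hp1, hp2⟩ := exists_coupling α β hmass
  refine csInf_le_csInf ⟨0, fun _ hc => W1_nonneg_mem hc⟩ ⟨_, π₀, hp1, hp2, rfl⟩ ?_
  rintro c ⟨π, hf, hs, rfl⟩
  have hdm : Measurable fun x : X => (x, x) := measurable_id.prodMk measurable_id
  have hcint : Integrable (fun p : X × X => dist p.1 p.2) π :=
    cost_integrable (le_of_eq hf) (le_of_eq hs) x0 hmα hmβ
  have hcd : Continuous fun p : X × X => dist p.1 p.2 := continuous_dist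
  have hdiagint : Integrable (fun p : X × X => dist p.1 p.2) (γ.map fun x => (x, x)) := by
    refine (integrable_map_measure hcd.aestronglyMeasurable hdm.aemeasurable).mpr ?_
    refine (integrable_zero X ℝ γ).congr (Filter.Eventually.of_forall fun x => ?_)
    simp [Function.comp]
  have hdiag0 : ∫ p, dist p.1 p.2 ∂(γ.map fun x => (x, x)) = 0 := by
    rw [integral_map hdm.aemeasurable hcd.aestronglyMeasurable]
    simp
  refine ⟨π + γ.map fun x => (x, x), ?_, ?_, ?_⟩
  · rw [Measure.map_add _ _ measurable_fst, hf,
      Measure.map_map measurable_fst hdm,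
      show (Prod.fst ∘ fun x : X => (x, x)) = id from rfl, Measure.map_id]
  · rw [Measure.map_add _ _ measurable_snd, hs,
      Measure.map_map measurable_snd hdm,
      show (Prod.snd ∘ fun x : X => (x, x)) = id from rfl, Measure.map_id]
  · rw [integral_add_measure hcint hdiagint, hdiag0, add_zero]

end Cost

section Key

variable {X : Type*} [MetricSpace X] [CompleteSpace X] [TopologicalSpace.SeparableSpace X]
  [MeasurableSpace X] [BorelSpace X]

set_option maxHeartbeats 2000000 in
/-- The mass-subtraction lemma: from a coupling of `α + γ` and `β + γ` one can construct a
coupling of `α` and `β` with no larger transport cost. -/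
lemma exists_coupling_of_add (x0 : X) (α β γ : Measure X)
    [IsFiniteMeasure α] [IsFiniteMeasure β] [IsFiniteMeasure γ]
    (hmα : Integrable (fun x => dist x x0) α) (hmβ : Integrable (fun x => dist x x0) β)
    (hmγ : Integrable (fun x => dist x x0) γ)
    (π : Measure (X × X)) (hπ1 : π.map Prod.fst = α + γ) (hπ2 : π.map Prod.snd = β + γ) :
    ∃ π' : Measure (X × X), π'.map Prod.fst = α ∧ π'.map Prod.snd = β ∧
      ∫ p, dist p.1 p.2 ∂π' ≤ ∫ p, dist p.1 p.2 ∂π := by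
  haveI : SecondCountableTopology X := UniformSpace.secondCountable_of_separable X
  haveI : Nonempty X := ⟨x0⟩
  have hπuniv : π Set.univ = (α + γ) Set.univ := by
    rw [← hπ1, Measure.map_apply measurable_fst MeasurableSet.univ]; rfl
  haveI : IsFiniteMeasure π := fin_of_ne_top (by rw [hπuniv]; exact measure_ne_top _ _)
  -- densities
  have hαle : α ≤ α + γ := Measure.le_add_right le_rfl
  have hβle : β ≤ β + γ := Measure.le_add_right le_rfl
  set f : X → ℝ≥0∞ := fun x => min (α.rnDeriv (α + γ) x) 1 with hfdef
  have hfm : Measurable f := (Measure.measurable_rnDeriv _ _).min measurable_const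
  have hf1 : ∀ x, f x ≤ 1 := fun x => min_le_right _ _
  have hwfα : (α + γ).withDensity f = α := by
    have hae : α.rnDeriv (α + γ) =ᵐ[α + γ] f := by
      filter_upwards [Measure.rnDeriv_le_one_of_le hαle] with x hx
      simp only [hfdef]
      exact (min_eq_left hx).symm
    rw [← withDensity_congr_ae hae,
      Measure.withDensity_rnDeriv_eq _ _ (Measure.absolutelyContinuous_of_le hαle)]
  set fc : X → ℝ≥0∞ := fun x => 1 - f x with hfcdef
  have hfcm : Measurable fc := measurable_const.sub hfm
  have hfc1 : ∀ x, fc x ≤ 1 := fun x => tsub_le_self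
  have hfsum : ∀ x, f x + fc x = 1 := fun x => add_tsub_cancel_of_le (hf1 x)
  set g : X → ℝ≥0∞ := fun x => min (β.rnDeriv (β + γ) x) 1 with hgdef
  have hgm : Measurable g := (Measure.measurable_rnDeriv _ _).min measurable_const
  have hg1 : ∀ x, g x ≤ 1 := fun x => min_le_right _ _
  have hwgβ : (β + γ).withDensity g = β := by
    have hae : β.rnDeriv (β + γ) =ᵐ[β + γ] g := by
      filter_upwards [Measure.rnDeriv_le_one_of_le hβle] with x hx
      simp only [hgdef]
      exact (min_eq_left hx).symm
    rw [← withDensity_congr_ae hae,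
      Measure.withDensity_rnDeriv_eq _ _ (Measure.absolutelyContinuous_of_le hβle)]
  set gc : X → ℝ≥0∞ := fun x => 1 - g x with hgcdef
  have hgcm : Measurable gc := measurable_const.sub hgm
  have hgc1 : ∀ x, gc x ≤ 1 := fun x => tsub_le_self
  have hgsum : ∀ x, g x + gc x = 1 := fun x => add_tsub_cancel_of_le (hg1 x)
  -- complementary densities on the marginals
  have hwfcγ : (α + γ).withDensity fc = γ := by
    have h5 : (α + γ).withDensity f + (α + γ).withDensity fc = α + γ := by
      have h := withDensity_add_right (μ := α + γ) f hfcm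
      rw [← h, show f + fc = fun _ => 1 from funext fun x => hfsum x]
      simpa using withDensity_one (μ := α + γ)
    rw [hwfα] at h5
    exact meas_cancel_left h5
  have hwgcγ : (β + γ).withDensity gc = γ := by
    have h5 : (β + γ).withDensity g + (β + γ).withDensity gc = β + γ := by
      have h := withDensity_add_right (μ := β + γ) g hgcm
      rw [← h, show g + gc = fun _ => 1 from funext fun x => hgsum x]
      simpa using withDensity_one (μ := β + γ)
    rw [hwgβ] at h5
    exact meas_cancel_left h5
  -- decomposition of π
  set pz : Measure (X × X) := wd1 f π with hpzdef
  set po : Measure (X × X) := wd1 fc π with hpodef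
  have hpzle : pz ≤ π := withDensity_le_self' fun p => hf1 p.1
  have hpole : po ≤ π := withDensity_le_self' fun p => hfc1 p.1
  haveI : IsFiniteMeasure pz := isFiniteMeasure_of_le π hpzle
  haveI : IsFiniteMeasure po := isFiniteMeasure_of_le π hpole
  have hsplitπ : pz + po = π := wd1_add_cancel hfcm hfsum π
  have hpzfst : pz.map Prod.fst = α := by rw [hpzdef, wd1_map_fst hfm, hπ1, hwfα]
  have hpofst : po.map Prod.fst = γ := by rw [hpodef, wd1_map_fst hfcm, hπ1, hwfcγ]
  -- the kernel
  set K : Kernel X X := po.condKernel with hKdef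
  haveI : IsMarkovKernel K := by rw [hKdef]; infer_instance
  have hγK : γ ⊗ₘ K = po := by
    have h := po.disintegrate po.condKernel
    rwa [show po.fst = po.map Prod.fst from rfl, hpofst] at h
  -- the chain
  set θ : ℕ → Measure (X × X) := fun n => Nat.rec pz (fun _ m => mv K (wd2 gc m)) n with hθdef
  have hθ0 : θ 0 = pz := rfl
  have hθs : ∀ n, θ (n + 1) = mv K (wd2 gc (θ n)) := fun n => rfl
  set c : ℕ → Measure (X × X) := fun n => wd2 gc (θ n) with hcdef
  set e : ℕ → Measure (X × X) := fun n => wd2 g (θ n) with hedef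
  set ρ : ℕ → Measure X := fun n => ((θ n).map Prod.snd).withDensity gc with hρdef
  set τ : ℕ → Measure X := fun n => Nat.rec γ (fun _ σ => Tk K gc σ) n with hτdef
  have hτ0 : τ 0 = γ := rfl
  have hτs : ∀ n, τ (n + 1) = Tk K gc (τ n) := fun n => rfl
  have hprobe : IsFiniteMeasure γ := inferInstance
  have hprobe2 : SFinite γ := inferInstance
  -- finiteness
  have hcleθ : ∀ n, c n ≤ θ n := fun n => withDensity_le_self' fun p => hgc1 p.2
  have heleθ : ∀ n, e n ≤ θ n := fun n => withDensity_le_self' fun p => hg1 p.2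
  have hθfin : ∀ n, (θ n) Set.univ ≠ ⊤ := by
    intro n
    induction n with
    | zero => exact measure_ne_top pz _
    | succ n ih =>
      haveI : IsFiniteMeasure (θ n) := fin_of_ne_top ih
      haveI : IsFiniteMeasure (wd2 gc (θ n)) := isFiniteMeasure_of_le _ (hcleθ n)
      rw [hθs n, mv_univ]
      exact measure_ne_top _ _
  have hτfin : ∀ n, (τ n) Set.univ ≠ ⊤ := by
    intro n
    induction n with
    | zero =>
      rw [hτ0]
      exact measure_ne_top γ _
    | succ n ih =>
      haveI : IsFiniteMeasure (τ n) := fin_of_ne_top ih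
      rw [hτs n]
      exact ((Tk_univ_le hgc1 (τ n)).trans_lt ih.lt_top).ne
  have hρfin : ∀ n, (ρ n) Set.univ ≠ ⊤ := by
    intro n
    haveI : IsFiniteMeasure (θ n) := fin_of_ne_top (hθfin n)
    refine ((Measure.le_iff'.mp (withDensity_le_self' hgc1) Set.univ).trans_lt ?_).ne
    rw [Measure.map_apply measurable_snd MeasurableSet.univ]
    exact (hθfin n).lt_top
  -- basic relations
  have hec : ∀ n, e n + c n = θ n := fun n => wd2_add_cancel hgcm hgsum (θ n)
  have hcsnd : ∀ n, (c n).map Prod.snd = ρ n := fun n => wd2_map_snd hgcm (θ n)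
  have hθfst : ∀ n, (θ (n + 1)).map Prod.fst = (c n).map Prod.fst := fun n => by
    haveI : IsFiniteMeasure (θ n) := fin_of_ne_top (hθfin n)
    haveI : IsFiniteMeasure (wd2 gc (θ n)) :=
      isFiniteMeasure_of_le (θ n) (withDensity_le_self' fun p => hgc1 p.2)
    exact mv_map_fst (wd2 gc (θ n))
  have hθsnd : ∀ n, (θ (n + 1)).map Prod.snd = ((ρ n) ⊗ₘ K).map Prod.snd := fun n => by
    haveI : IsFiniteMeasure (θ n) := fin_of_ne_top (hθfin n)
    haveI : IsFiniteMeasure (wd2 gc (θ n)) :=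
      isFiniteMeasure_of_le (θ n) (withDensity_le_self' fun p => hgc1 p.2)
    have h := mv_map_snd (K := K) (wd2 gc (θ n))
    rw [wd2_map_snd hgcm (θ n)] at h
    exact h
  have hρrec : ∀ n, ρ (n + 1) = Tk K gc (ρ n) := fun n => by
    show ((θ (n + 1)).map Prod.snd).withDensity gc = Tk K gc (ρ n)
    rw [hθsnd n]
    rfl
  -- telescoping identity
  have hidbase : ρ 0 + Tk K gc γ = γ := by
    have h1 : ρ 0 = (pz.map Prod.snd).withDensity gc := rfl
    have h2 : Tk K gc γ = (po.map Prod.snd).withDensity gc := by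
      rw [show Tk K gc γ = ((γ ⊗ₘ K).map Prod.snd).withDensity gc from rfl, hγK]
    rw [h1, h2, ← withDensity_add_measure, ← Measure.map_add _ _ measurable_snd, hsplitπ,
      hπ2, hwgcγ]
  have hid : ∀ n, ρ n + τ (n + 1) = τ n := by
    intro n
    induction n with
    | zero => exact hidbase
    | succ n ih =>
      haveI : IsFiniteMeasure (ρ n) := fin_of_ne_top (hρfin n)
      haveI : IsFiniteMeasure (τ (n + 1)) := fin_of_ne_top (hτfin (n + 1))
      rw [hρrec n, hτs (n + 1), ← Tk_add gc (ρ n) (τ (n + 1)), ih, ← hτs n]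
  have hpartial : ∀ N, (∑ n ∈ Finset.range N, ρ n) + τ N = γ := by
    intro N
    induction N with
    | zero => simp [hτ0]
    | succ N ih =>
      rw [Finset.sum_range_succ, add_assoc, hid N, ih]
  have hsumρle : ∀ N, (∑ n ∈ Finset.range N, ρ n) ≤ γ := fun N => by
    rw [← hpartial N]; exact Measure.le_add_right le_rfl
  have hτle : ∀ N, τ N ≤ γ := fun N => by
    rw [← hpartial N]
    exact Measure.le_add_left le_rfl
  have hρle : ∀ n, ρ n ≤ γ := fun n => by
    refine le_trans ?_ (hsumρle (n + 1))
    rw [Finset.sum_range_succ]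
    exact Measure.le_add_left le_rfl
  -- mass convergence
  have hρtsum : ∑' n, ρ n Set.univ ≠ ⊤ := by
    refine ne_top_of_le_ne_top (measure_ne_top γ Set.univ) ?_
    refine Summable.tsum_le_of_sum_le ENNReal.summable fun s => ?_
    obtain ⟨N, hN⟩ := s.exists_nat_subset_range
    calc ∑ n ∈ s, ρ n Set.univ ≤ ∑ n ∈ Finset.range N, ρ n Set.univ :=
          Finset.sum_le_sum_of_subset hN
    _ = (∑ n ∈ Finset.range N, ρ n) Set.univ := (Measure.finset_sum_apply _ _ _).symm
    _ ≤ γ Set.univ := Measure.le_iff'.mp (hsumρle N) _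
  have hρ0lim : Filter.Tendsto (fun n => ρ n Set.univ) Filter.atTop (nhds 0) :=
    ENNReal.tendsto_atTop_zero_of_tsum_ne_top hρtsum
  have hτmassrec : ∀ N, Tk K g (τ N) Set.univ + τ (N + 1) Set.univ = τ N Set.univ := by
    intro N
    haveI : IsFiniteMeasure (τ N) := fin_of_ne_top (hτfin N)
    rw [hτs N]
    exact Tk_univ_add hgcm hgsum (τ N)
  have hτanti : Antitone fun N => τ N Set.univ := by
    refine antitone_nat_of_succ_le fun N => ?_
    rw [← hτmassrec N]
    exact le_add_self
  have hτlim : Filter.Tendsto (fun N => τ N Set.univ) Filter.atTop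
      (nhds (⨅ N, τ N Set.univ)) := tendsto_atTop_iInf hτanti
  have hSlim : Filter.Tendsto (fun N => Tk K g (τ N) Set.univ) Filter.atTop (nhds 0) := by
    have hS : ∀ N, Tk K g (τ N) Set.univ = τ N Set.univ - τ (N + 1) Set.univ := fun N =>
      ENNReal.eq_sub_of_add_eq (hτfin (N + 1)) (hτmassrec N)
    have h2 : Filter.Tendsto (fun N => τ (N + 1) Set.univ) Filter.atTop
        (nhds (⨅ N, τ N Set.univ)) := by
      have := hτlim.comp (Filter.tendsto_add_atTop_nat 1)
      exact this
    have h3 := ENNReal.Tendsto.sub hτlim h2 (Or.inl ?_)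
    · simp only [tsub_self] at h3
      refine h3.congr fun N => (hS N).symm
    · exact ((iInf_le (fun N => τ N Set.univ) 0).trans_lt (hτfin 0).lt_top).ne
  -- first marginal of the sum
  have hefst_partial : ∀ N,
      (∑ n ∈ Finset.range (N + 1), (e n).map Prod.fst) + (c N).map Prod.fst = α := by
    intro N
    induction N with
    | zero =>
      rw [Finset.sum_range_one, ← Measure.map_add _ _ measurable_fst, hec 0, hθ0, hpzfst]
    | succ N ih =>
      rw [Finset.sum_range_succ, add_assoc, ← Measure.map_add _ _ measurable_fst, hec (N + 1),
        hθfst N, ih]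
  have hcuniv : ∀ N, (c N) Set.univ = ρ N Set.univ := fun N => by
    rw [← hcsnd N, Measure.map_apply measurable_snd MeasurableSet.univ]; rfl
  have hsumefst : (Measure.sum e).map Prod.fst = α := by
    ext s hs
    rw [Measure.map_apply measurable_fst hs, Measure.sum_apply _ (measurable_fst hs)]
    have hterm : ∀ n, e n (Prod.fst ⁻¹' s) = ((e n).map Prod.fst) s := fun n =>
      (Measure.map_apply measurable_fst hs).symm
    have hparts : ∀ N, (∑ n ∈ Finset.range (N + 1), ((e n).map Prod.fst) s)
        + ((c N).map Prod.fst) s = α s := fun N => by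
      have h := congrArg (fun m : Measure X => m s) (hefst_partial N)
      simpa [Measure.finset_sum_apply, Measure.add_apply] using h
    have h1 : Filter.Tendsto (fun N => ∑ n ∈ Finset.range (N + 1), ((e n).map Prod.fst) s)
        Filter.atTop (nhds (∑' n, ((e n).map Prod.fst) s)) :=
      (ENNReal.tendsto_nat_tsum _).comp (Filter.tendsto_add_atTop_nat 1)
    have h2 : Filter.Tendsto (fun N => ((c N).map Prod.fst) s) Filter.atTop (nhds 0) := by
      refine tendsto_of_tendsto_of_tendsto_of_le_of_le tendsto_const_nhds hρ0lim
        (fun N => zero_le) (fun N => ?_)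
      rw [Measure.map_apply measurable_fst hs, ← hcuniv N]
      exact measure_mono (Set.subset_univ _)
    have hcombined := h1.add h2
    rw [add_zero] at hcombined
    have hconst : Filter.Tendsto (fun N => (∑ n ∈ Finset.range (N + 1), ((e n).map Prod.fst) s)
        + ((c N).map Prod.fst) s) Filter.atTop (nhds (α s)) := by
      simp only [hparts]
      exact tendsto_const_nhds
    have := tendsto_nhds_unique hcombined hconst
    rw [← this]
    exact tsum_congr hterm
  -- second marginal of the sum
  have hesnd0 : (e 0).map Prod.snd + Tk K g γ = β := by
    have h1 : (e 0).map Prod.snd = (pz.map Prod.snd).withDensity g := wd2_map_snd hgm (θ 0)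
    have h2 : Tk K g γ = (po.map Prod.snd).withDensity g := by
      rw [show Tk K g γ = ((γ ⊗ₘ K).map Prod.snd).withDensity g from rfl, hγK]
    rw [h1, h2, ← withDensity_add_measure, ← Measure.map_add _ _ measurable_snd, hsplitπ,
      hπ2, hwgβ]
  have hesnd_rec : ∀ n, (e (n + 1)).map Prod.snd = Tk K g (ρ n) := fun n => by
    have h := wd2_map_snd hgm (θ (n + 1))
    rw [hθsnd n] at h
    exact h
  have hesnd_partial : ∀ N,
      (∑ n ∈ Finset.range (N + 1), (e n).map Prod.snd) + Tk K g (τ N) = β := by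
    intro N
    induction N with
    | zero => rw [Finset.sum_range_one, hτ0]; exact hesnd0
    | succ N ih =>
      haveI : IsFiniteMeasure (ρ N) := fin_of_ne_top (hρfin N)
      haveI : IsFiniteMeasure (τ (N + 1)) := fin_of_ne_top (hτfin (N + 1))
      rw [Finset.sum_range_succ, add_assoc, hesnd_rec N, ← Tk_add g (ρ N) (τ (N + 1)), hid N, ih]
  have hsumesnd : (Measure.sum e).map Prod.snd = β := by
    ext s hs
    rw [Measure.map_apply measurable_snd hs, Measure.sum_apply _ (measurable_snd hs)]
    have hterm : ∀ n, e n (Prod.snd ⁻¹' s) = ((e n).map Prod.snd) s := fun n =>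
      (Measure.map_apply measurable_snd hs).symm
    have hparts : ∀ N, (∑ n ∈ Finset.range (N + 1), ((e n).map Prod.snd) s)
        + (Tk K g (τ N)) s = β s := fun N => by
      have h := congrArg (fun m : Measure X => m s) (hesnd_partial N)
      simpa [Measure.finset_sum_apply, Measure.add_apply] using h
    have h1 : Filter.Tendsto (fun N => ∑ n ∈ Finset.range (N + 1), ((e n).map Prod.snd) s)
        Filter.atTop (nhds (∑' n, ((e n).map Prod.snd) s)) :=
      (ENNReal.tendsto_nat_tsum _).comp (Filter.tendsto_add_atTop_nat 1)
    have h2 : Filter.Tendsto (fun N => (Tk K g (τ N)) s) Filter.atTop (nhds 0) := by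
      refine tendsto_of_tendsto_of_tendsto_of_le_of_le tendsto_const_nhds hSlim
        (fun N => zero_le) (fun N => measure_mono (Set.subset_univ _))
    have hcombined := h1.add h2
    rw [add_zero] at hcombined
    have hconst : Filter.Tendsto (fun N => (∑ n ∈ Finset.range (N + 1), ((e n).map Prod.snd) s)
        + (Tk K g (τ N)) s) Filter.atTop (nhds (β s)) := by
      simp only [hparts]
      exact tendsto_const_nhds
    have := tendsto_nhds_unique hcombined hconst
    rw [← this]
    exact tsum_congr hterm
  -- cost estimates
  have hmαγ : Integrable (fun x => dist x x0) (α + γ) := hmα.add_measure hmγ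
  have hmβγ : Integrable (fun x => dist x x0) (β + γ) := hmβ.add_measure hmγ
  have hcostπ : Integrable (fun p : X × X => dist p.1 p.2) π :=
    cost_integrable (le_of_eq hπ1) (le_of_eq hπ2) x0 hmαγ hmβγ
  have hθfst_le : ∀ n, (θ n).map Prod.fst ≤ α + γ := by
    intro n
    induction n with
    | zero => rw [hθ0, hpzfst]; exact hαle
    | succ n ih =>
      rw [hθfst n]
      exact le_trans (Measure.map_mono (hcleθ n) measurable_fst) ih
  have hpoK_le : ∀ n, (ρ n) ⊗ₘ K ≤ π := by
    intro n
    haveI : IsFiniteMeasure (ρ n) := fin_of_ne_top (hρfin n)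
    calc (ρ n) ⊗ₘ K ≤ γ ⊗ₘ K := compProd_mono_left (hρle n)
    _ = po := hγK
    _ ≤ π := hpole
  have hθsnd_le : ∀ n, (θ n).map Prod.snd ≤ β + γ := by
    intro n
    induction n with
    | zero =>
      rw [hθ0, ← hπ2]
      exact Measure.map_mono hpzle measurable_snd
    | succ n ih =>
      rw [hθsnd n, ← hπ2]
      exact Measure.map_mono (hpoK_le n) measurable_snd
  have hcostθ : ∀ n, Integrable (fun p : X × X => dist p.1 p.2) (θ n) := fun n =>
    cost_integrable (hθfst_le n) (hθsnd_le n) x0 hmαγ hmβγ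
  have hcostc : ∀ n, Integrable (fun p : X × X => dist p.1 p.2) (c n) := fun n =>
    (hcostθ n).mono_measure (hcleθ n)
  have hcoste : ∀ n, Integrable (fun p : X × X => dist p.1 p.2) (e n) := fun n =>
    (hcostθ n).mono_measure (heleθ n)
  have hcostρK : ∀ n, Integrable (fun p : X × X => dist p.1 p.2) ((ρ n) ⊗ₘ K) := fun n =>
    hcostπ.mono_measure (hpoK_le n)
  have hcd : Continuous fun p : X × X => dist p.1 p.2 := continuous_dist
  -- one step cost inequality
  have hstep : ∀ n, ∫ p, dist p.1 p.2 ∂(θ (n + 1)) ≤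
      (∫ p, dist p.1 p.2 ∂(c n)) + ∫ p, dist p.1 p.2 ∂((ρ n) ⊗ₘ K) := by
    intro n
    haveI : IsFiniteMeasure (θ n) := fin_of_ne_top (hθfin n)
    haveI : IsFiniteMeasure (c n) := isFiniteMeasure_of_le _ (hcleθ n)
    have hmapG : θ (n + 1)
        = ((c n) ⊗ₘ (K.comap Prod.snd measurable_snd)).map fun p => (p.1.1, p.2) := rfl
    set t3 : Measure ((X × X) × X) := (c n) ⊗ₘ (K.comap Prod.snd measurable_snd) with ht3
    have hmapfst : t3.map Prod.fst = c n := Measure.fst_compProd (c n) _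
    have hmapF : t3.map (fun p => (p.1.2, p.2)) = (ρ n) ⊗ₘ K := by
      have h := map_swap_compProd (K := K) (c n)
      rw [hcsnd n] at h
      exact h
    have i1 : Integrable (fun p : (X × X) × X => dist p.1.1 p.1.2) t3 := by
      have h := (integrable_map_measure hcd.aestronglyMeasurable
        measurable_fst.aemeasurable).mp (by rw [hmapfst]; exact hcostc n)
      exact h
    have i2 : Integrable (fun p : (X × X) × X => dist p.1.2 p.2) t3 := by
      have h := (integrable_map_measure hcd.aestronglyMeasurable
        measurable_F.aemeasurable).mp (by rw [hmapF]; exact hcostρK n)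
      exact h
    have hcd3 : Continuous fun p : (X × X) × X => dist p.1.1 p.2 :=
      (continuous_fst.comp continuous_fst).dist continuous_snd
    have i0 : Integrable (fun p : (X × X) × X => dist p.1.1 p.2) t3 := by
      refine (i1.add i2).mono' hcd3.aestronglyMeasurable ?_
      refine Filter.Eventually.of_forall fun p => ?_
      rw [Real.norm_eq_abs, abs_of_nonneg dist_nonneg]
      exact dist_triangle _ _ _
    calc ∫ p, dist p.1 p.2 ∂(θ (n + 1))
        = ∫ p, dist p.1.1 p.2 ∂t3 := by
          rw [hmapG, integral_map measurable_G.aemeasurable hcd.aestronglyMeasurable]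
    _ ≤ ∫ p, (dist p.1.1 p.1.2 + dist p.1.2 p.2) ∂t3 := by
          refine integral_mono i0 (i1.add i2) fun p => dist_triangle _ _ _
    _ = (∫ p, dist p.1.1 p.1.2 ∂t3) + ∫ p, dist p.1.2 p.2 ∂t3 := integral_add i1 i2
    _ = (∫ p, dist p.1 p.2 ∂(c n)) + ∫ p, dist p.1 p.2 ∂((ρ n) ⊗ₘ K) := by
          rw [← hmapfst, ← hmapF,
            integral_map measurable_fst.aemeasurable hcd.aestronglyMeasurable,
            integral_map measurable_F.aemeasurable hcd.aestronglyMeasurable]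
  have hnonneg : ∀ μ' : Measure (X × X), 0 ≤ ∫ p, dist p.1 p.2 ∂μ' := fun μ' =>
    integral_nonneg fun p => dist_nonneg
  -- accumulated cost bound
  have hmain : ∀ N, ((∑ n ∈ Finset.range (N + 1), ∫ p, dist p.1 p.2 ∂(e n))
      + ∫ p, dist p.1 p.2 ∂(c N)) ≤
      (∫ p, dist p.1 p.2 ∂pz) + ∑ n ∈ Finset.range N, ∫ p, dist p.1 p.2 ∂((ρ n) ⊗ₘ K) := by
    intro N
    induction N with
    | zero =>
      rw [Finset.sum_range_one, Finset.sum_range_zero, add_zero,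
        ← integral_add_measure (hcoste 0) (hcostc 0)]
      rw [show e 0 + c 0 = pz from (hec 0).trans hθ0]
    | succ N ih =>
      rw [Finset.sum_range_succ, add_assoc,
        ← integral_add_measure (hcoste (N + 1)) (hcostc (N + 1))]
      rw [show e (N + 1) + c (N + 1) = θ (N + 1) from hec (N + 1)]
      calc (∑ n ∈ Finset.range (N + 1), ∫ p, dist p.1 p.2 ∂(e n))
            + ∫ p, dist p.1 p.2 ∂(θ (N + 1))
          ≤ (∑ n ∈ Finset.range (N + 1), ∫ p, dist p.1 p.2 ∂(e n))
            + ((∫ p, dist p.1 p.2 ∂(c N)) + ∫ p, dist p.1 p.2 ∂((ρ N) ⊗ₘ K)) := by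
            exact add_le_add_right (hstep N) _
      _ = ((∑ n ∈ Finset.range (N + 1), ∫ p, dist p.1 p.2 ∂(e n))
            + ∫ p, dist p.1 p.2 ∂(c N)) + ∫ p, dist p.1 p.2 ∂((ρ N) ⊗ₘ K) := by ring
      _ ≤ ((∫ p, dist p.1 p.2 ∂pz) + ∑ n ∈ Finset.range N, ∫ p, dist p.1 p.2 ∂((ρ n) ⊗ₘ K))
            + ∫ p, dist p.1 p.2 ∂((ρ N) ⊗ₘ K) := add_le_add_left ih _
      _ = (∫ p, dist p.1 p.2 ∂pz) + ∑ n ∈ Finset.range (N + 1),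
            ∫ p, dist p.1 p.2 ∂((ρ n) ⊗ₘ K) := by rw [Finset.sum_range_succ]; ring
  have hcostpo : Integrable (fun p : X × X => dist p.1 p.2) po := hcostπ.mono_measure hpole
  have hcostpz : Integrable (fun p : X × X => dist p.1 p.2) pz := hcostπ.mono_measure hpzle
  have hEsum : ∀ N, (∑ n ∈ Finset.range N, ∫ p, dist p.1 p.2 ∂((ρ n) ⊗ₘ K)) ≤
      ∫ p, dist p.1 p.2 ∂po := by
    intro N
    have hFsum : ∀ M, (∑ n ∈ Finset.range M, ∫ p, dist p.1 p.2 ∂((ρ n) ⊗ₘ K))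
        = ∫ p, dist p.1 p.2 ∂((∑ n ∈ Finset.range M, ρ n) ⊗ₘ K) := by
      intro M
      induction M with
      | zero => simp
      | succ M ih =>
        haveI : IsFiniteMeasure (ρ M) := fin_of_ne_top (hρfin M)
        haveI : IsFiniteMeasure (∑ n ∈ Finset.range M, ρ n) :=
          isFiniteMeasure_of_le γ (hsumρle M)
        rw [Finset.sum_range_succ, Finset.sum_range_succ, Measure.compProd_add_left,
          integral_add_measure ?_ (hcostρK M), ih]
        refine hcostπ.mono_measure ?_
        calc (∑ n ∈ Finset.range M, ρ n) ⊗ₘ K ≤ γ ⊗ₘ K := compProd_mono_left (hsumρle M)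
        _ = po := hγK
        _ ≤ π := hpole
    rw [hFsum N]
    haveI : IsFiniteMeasure (∑ n ∈ Finset.range N, ρ n) :=
      isFiniteMeasure_of_le γ (hsumρle N)
    refine integral_mono_measure ?_ (Filter.Eventually.of_forall fun p => dist_nonneg) hcostpo
    calc (∑ n ∈ Finset.range N, ρ n) ⊗ₘ K ≤ γ ⊗ₘ K := compProd_mono_left (hsumρle N)
    _ = po := hγK
  have hsplitcost : (∫ p, dist p.1 p.2 ∂pz) + (∫ p, dist p.1 p.2 ∂po)
      = ∫ p, dist p.1 p.2 ∂π := by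
    rw [← integral_add_measure hcostpz hcostpo, hsplitπ]
  -- conclusion
  have hcostsum : Integrable (fun p : X × X => dist p.1 p.2) (Measure.sum e) :=
    cost_integrable (le_of_eq hsumefst) (le_of_eq hsumesnd) x0 hmα hmβ
  have hInt : ∫ p, dist p.1 p.2 ∂(Measure.sum e) = ∑' n, ∫ p, dist p.1 p.2 ∂(e n) :=
    integral_sum_measure hcostsum
  have hsummable : Summable fun n => ∫ p, dist p.1 p.2 ∂(e n) :=
    (hasSum_integral_measure hcostsum).summable
  have htsumle : (∑' n, ∫ p, dist p.1 p.2 ∂(e n)) ≤ ∫ p, dist p.1 p.2 ∂π := by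
    refine Summable.tsum_le_of_sum_le hsummable fun s => ?_
    obtain ⟨N, hN⟩ := s.exists_nat_subset_range
    calc ∑ n ∈ s, ∫ p, dist p.1 p.2 ∂(e n)
        ≤ ∑ n ∈ Finset.range (N + 1), ∫ p, dist p.1 p.2 ∂(e n) :=
          Finset.sum_le_sum_of_subset_of_nonneg
            (hN.trans (Finset.range_subset_range.mpr (Nat.le_succ N)))
            (fun i _ _ => hnonneg (e i))
    _ ≤ (∑ n ∈ Finset.range (N + 1), ∫ p, dist p.1 p.2 ∂(e n))
          + ∫ p, dist p.1 p.2 ∂(c N) := le_add_of_nonneg_right (hnonneg (c N))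
    _ ≤ (∫ p, dist p.1 p.2 ∂pz) + ∑ n ∈ Finset.range N, ∫ p, dist p.1 p.2 ∂((ρ n) ⊗ₘ K) :=
          hmain N
    _ ≤ (∫ p, dist p.1 p.2 ∂pz) + ∫ p, dist p.1 p.2 ∂po := add_le_add_right (hEsum N) _
    _ = ∫ p, dist p.1 p.2 ∂π := hsplitcost
  exact ⟨Measure.sum e, hsumefst, hsumesnd, by rw [hInt]; exact htsumle⟩

/-- the hard direction: removing a common measure can only decrease `W1`. -/
lemma W1_le_add (x0 : X) (α β γ : Measure X)
    [IsFiniteMeasure α] [IsFiniteMeasure β] [IsFiniteMeasure γ]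
    (hmα : Integrable (fun x => dist x x0) α) (hmβ : Integrable (fun x => dist x x0) β)
    (hmγ : Integrable (fun x => dist x x0) γ)
    (hmass : α Set.univ = β Set.univ) :
    W1 α β ≤ W1 (α + γ) (β + γ) := by
  haveI : SecondCountableTopology X := UniformSpace.secondCountable_of_separable X
  have hmass' : (α + γ) Set.univ = (β + γ) Set.univ := by
    rw [Measure.add_apply, Measure.add_apply, hmass]
  obtain ⟨π₀, h1, h2⟩ := exists_coupling (α + γ) (β + γ) hmass'
  refine le_csInf ⟨_, π₀, h1, h2, rfl⟩ ?_
  rintro cc ⟨π, hf, hs, rfl⟩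
  obtain ⟨π', h1', h2', hle⟩ := exists_coupling_of_add x0 α β γ hmα hmβ hmγ π hf hs
  exact (W1_le_cost π' h1' h2').trans hle

/-- `W1` is invariant under adding a common measure to both arguments. -/
lemma W1_add_eq (x0 : X) (α β γ : Measure X)
    [IsFiniteMeasure α] [IsFiniteMeasure β] [IsFiniteMeasure γ]
    (hmα : Integrable (fun x => dist x x0) α) (hmβ : Integrable (fun x => dist x x0) β)
    (hmγ : Integrable (fun x => dist x x0) γ)
    (hmass : α Set.univ = β Set.univ) :
    W1 (α + γ) (β + γ) = W1 α β := by
  haveI : SecondCountableTopology X := UniformSpace.secondCountable_of_separable X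
  exact le_antisymm (W1_add_le α β γ x0 hmα hmβ hmass)
    (W1_le_add x0 α β γ hmα hmβ hmγ hmass)

end Key

end W1WD

/-- for finite signed measures `μ, ν` with total mass 1 and finite first
moment on a Polish space, the quantity `W₁(μ⁺+ν⁻, μ⁻+ν⁺)` does not depend on the chosen
decompositions `μ = μ⁺ − μ⁻`, `ν = ν⁺ − ν⁻` into finite positive measures with finite
first moments.  The equality of signed measures `μ⁺ − μ⁻ = μ⁺' − μ⁻'` is encoded as
`μ⁺ + μ⁻' = μ⁺' + μ⁻`. -/
theorem wasserstein_signed_well_defined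
    {X : Type*} [MetricSpace X] [CompleteSpace X] [TopologicalSpace.SeparableSpace X]
    [MeasurableSpace X] [BorelSpace X]
    (μp μm νp νm μp' μm' νp' νm' : Measure X)
    [IsFiniteMeasure μp] [IsFiniteMeasure μm] [IsFiniteMeasure νp] [IsFiniteMeasure νm]
    [IsFiniteMeasure μp'] [IsFiniteMeasure μm'] [IsFiniteMeasure νp'] [IsFiniteMeasure νm']
    (hμ : μp + μm' = μp' + μm)
    (hν : νp + νm' = νp' + νm)
    (hμmass : μp Set.univ = μm Set.univ + 1)
    (hνmass : νp Set.univ = νm Set.univ + 1)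
    (hμmass' : μp' Set.univ = μm' Set.univ + 1)
    (hνmass' : νp' Set.univ = νm' Set.univ + 1)
    (hmom1 : ∀ x0 : X, Integrable (fun x => dist x x0) μp)
    (hmom2 : ∀ x0 : X, Integrable (fun x => dist x x0) μm)
    (hmom3 : ∀ x0 : X, Integrable (fun x => dist x x0) νp)
    (hmom4 : ∀ x0 : X, Integrable (fun x => dist x x0) νm)
    (hmom5 : ∀ x0 : X, Integrable (fun x => dist x x0) μp')
    (hmom6 : ∀ x0 : X, Integrable (fun x => dist x x0) μm')
    (hmom7 : ∀ x0 : X, Integrable (fun x => dist x x0) νp')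
    (hmom8 : ∀ x0 : X, Integrable (fun x => dist x x0) νm') :
    W1 (μp + νm) (μm + νp) = W1 (μp' + νm') (μm' + νp') := by
  rcases isEmpty_or_nonempty X with hX | hX
  · exfalso
    have h1 : (Set.univ : Set X) = ∅ := Set.univ_eq_empty_iff.mpr hX
    rw [h1, measure_empty, measure_empty] at hμmass
    simp at hμmass
  obtain ⟨x0⟩ := hX
  have hν' : νm + νp' = νm' + νp := by
    calc νm + νp' = νp' + νm := add_comm _ _
    _ = νp + νm' := hν.symm
    _ = νm' + νp := add_comm _ _
  have hABBA : (μp + νm) + (μm' + νp') = (μp' + νm') + (μm + νp) := by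
    calc (μp + νm) + (μm' + νp') = (μp + μm') + (νm + νp') := by abel
    _ = (μp' + μm) + (νm' + νp) := by rw [hμ, hν']
    _ = (μp' + νm') + (μm + νp) := by abel
  have hA : (μp + νm) Set.univ = (μm + νp) Set.univ := by
    rw [Measure.add_apply, Measure.add_apply, hμmass, hνmass]
    ring
  have hA' : (μp' + νm') Set.univ = (μm' + νp') Set.univ := by
    rw [Measure.add_apply, Measure.add_apply, hμmass', hνmass']
    ring
  calc W1 (μp + νm) (μm + νp)
      = W1 ((μp + νm) + (μm' + νp')) ((μm + νp) + (μm' + νp')) :=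
        (W1WD.W1_add_eq x0 (μp + νm) (μm + νp) (μm' + νp')
          ((hmom1 x0).add_measure (hmom4 x0)) ((hmom2 x0).add_measure (hmom3 x0))
          ((hmom6 x0).add_measure (hmom7 x0)) hA).symm
  _ = W1 ((μp' + νm') + (μm + νp)) ((μm' + νp') + (μm + νp)) := by
        rw [hABBA, add_comm (μm + νp) (μm' + νp')]
  _ = W1 (μp' + νm') (μm' + νp') :=
        W1WD.W1_add_eq x0 (μp' + νm') (μm' + νp') (μm + νp)
          ((hmom5 x0).add_measure (hmom8 x0)) ((hmom6 x0).add_measure (hmom7 x0))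
          ((hmom2 x0).add_measure (hmom3 x0)) hA'
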